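/- Let A be an invertible n×n real matrix with ρ(|A⁻¹|) < 1 (spectral radius of the entrywise absolute value of A⁻¹). Suppose x⋆ satisfies Ax⋆ − b = |x⋆| (entrywise absolute value). Then for every x ∈ ℝⁿ, the entrywise inequality |x − x⋆| ≤ (I − |A⁻¹|)⁻¹ |A⁻¹| · |Ax − b − |x|| holds, where (I − |A⁻¹|)⁻¹ exists and is entrywise nonnegative. -/

import Mathlib

open scoped ENNReal

/-- The spectral radius of a real square matrix (via its complex spectrum). -/
noncomputable def specRad {n : ℕ} (M : Matrix (Fin n) (Fin n) ℝ) : ℝ≥0∞ :=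
  spectralRadius ℂ (M.map (Complex.ofReal ·))

/-- Entrywise absolute value of a matrix. -/
def matAbs {n : ℕ} (M : Matrix (Fin n) (Fin n) ℝ) : Matrix (Fin n) (Fin n) ℝ :=
  Matrix.of fun i j => |M i j|

open scoped NNReal

set_option maxHeartbeats 1000000

section Aux

attribute [local instance] Matrix.linftyOpNormedRing Matrix.linftyOpNormedAlgebra

theorem entry_bound (n : ℕ) (M : Matrix (Fin n) (Fin n) ℝ) (hρ : specRad M < 1) :
    ∃ r : ℝ≥0, r < 1 ∧ ∃ N : ℕ, ∀ k ≥ N, ∀ i j, |(M ^ k) i j| ≤ (r : ℝ) ^ k := by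
  obtain ⟨r, hr1, hr2⟩ := ENNReal.lt_iff_exists_nnreal_btwn.mp hρ
  refine ⟨r, by exact_mod_cast hr2, ?_⟩
  set Mc := M.map (Complex.ofReal ·) with hMc
  have hT := spectrum.pow_nnnorm_pow_one_div_tendsto_nhds_spectralRadius Mc
  have hev : ∀ᶠ k : ℕ in Filter.atTop, (‖Mc ^ k‖₊ : ℝ≥0∞) ^ (1 / (k:ℝ)) < r :=
    hT.eventually_lt_const hr1
  obtain ⟨N, hN⟩ := hev.exists_forall_of_atTop
  refine ⟨max N 1, fun k hk i j => ?_⟩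
  have hk1 : 1 ≤ k := le_trans (le_max_right _ _) hk
  have hkN : N ≤ k := le_trans (le_max_left _ _) hk
  have h1 := hN k hkN
  have hk0 : (k : ℝ) ≠ 0 := by positivity
  have h2 : ‖Mc ^ k‖₊ ≤ r ^ k := by
    have h := ENNReal.rpow_le_rpow h1.le (Nat.cast_nonneg (α := ℝ) k)
    rw [← ENNReal.rpow_mul, one_div, inv_mul_cancel₀ hk0, ENNReal.rpow_one,
      ENNReal.rpow_natCast] at h
    exact_mod_cast h
  have h3 : ‖(Mc ^ k) i j‖₊ ≤ ‖Mc ^ k‖₊ := by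
    rw [Matrix.linfty_opNNNorm_def]
    exact le_trans (Finset.single_le_sum (f := fun j => ‖(Mc ^ k) i j‖₊)
      (fun _ _ => zero_le) (Finset.mem_univ j))
      (Finset.le_sup (f := fun i => ∑ j, ‖(Mc ^ k) i j‖₊) (Finset.mem_univ i))
  have h4 : (Mc ^ k) i j = Complex.ofReal ((M ^ k) i j) := by
    have h1 : Mc ^ k = (M ^ k).map (Complex.ofReal ·) :=
      (map_pow (Complex.ofRealHom.mapMatrix) M k).symm
    rw [h1]; rfl
  have h5 : ‖(Mc ^ k) i j‖ = |(M ^ k) i j| := by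
    rw [h4, Complex.norm_real, Real.norm_eq_abs]
  calc |(M ^ k) i j| = ‖(Mc ^ k) i j‖ := h5.symm
    _ ≤ ‖Mc ^ k‖ := h3
    _ ≤ (r : ℝ) ^ k := by exact_mod_cast h2

theorem neumann (n : ℕ) (M : Matrix (Fin n) (Fin n) ℝ) (hρ : specRad M < 1)
    (hM : ∀ i j, 0 ≤ M i j) :
    ∃ S : Matrix (Fin n) (Fin n) ℝ,
      (1 - M) * S = 1 ∧ S * (1 - M) = 1 ∧ ∀ i j, 0 ≤ S i j := by
  obtain ⟨r, hr, N, hN⟩ := entry_bound n M hρ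
  have hsum : ∀ i j, Summable (fun k : ℕ => (M ^ k) i j) := by
    intro i j
    apply Summable.of_norm_bounded_eventually_nat (g := fun k => (r : ℝ) ^ k)
      (summable_geometric_of_lt_one r.coe_nonneg (by exact_mod_cast hr))
    filter_upwards [Filter.eventually_atTop.mpr ⟨N, fun k hk => hN k hk i j⟩] with k hk
    simpa [Real.norm_eq_abs] using hk
  set S : Matrix (Fin n) (Fin n) ℝ := Matrix.of fun i j => ∑' k : ℕ, (M ^ k) i j with hS
  have hShift : ∀ i j, (∑' k : ℕ, (M ^ (k + 1)) i j) = S i j - (1 : Matrix (Fin n) (Fin n) ℝ) i j := by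
    intro i j
    have h0 := Summable.tsum_eq_zero_add (hsum i j)
    have : (M ^ 0) i j = (1 : Matrix (Fin n) (Fin n) ℝ) i j := by rw [pow_zero]
    rw [this] at h0
    simp only [hS, Matrix.of_apply]
    linarith [h0]
  have hnonneg : ∀ (k : ℕ) i j, 0 ≤ (M ^ k) i j := by
    intro k
    induction k with
    | zero => intro i j; rw [pow_zero]; by_cases h : i = j <;>
        simp [Matrix.one_apply, h]
    | succ k ih => intro i j; rw [pow_succ, Matrix.mul_apply]
                   exact Finset.sum_nonneg fun l _ => mul_nonneg (ih i l) (hM l j)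
  have hSpos : ∀ i j, 0 ≤ S i j := fun i j => tsum_nonneg fun k => hnonneg k i j
  refine ⟨S, ?_, ?_, hSpos⟩
  · ext i j
    rw [Matrix.mul_apply]
    have hstep : ∀ l, (1 - M) i l * S l j = ∑' k : ℕ, (1 - M) i l * (M ^ k) l j := by
      intro l
      rw [hS]; simp only [Matrix.of_apply]
      exact (tsum_mul_left).symm
    simp_rw [hstep]
    rw [← Summable.tsum_finsetSum (fun l _ => (hsum l j).mul_left _)]
    have hsw : ∀ k : ℕ, (∑ l, (1 - M) i l * (M ^ k) l j) = (M ^ k) i j - (M ^ (k + 1)) i j := by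
      intro k
      have : (∑ l, (1 - M) i l * (M ^ k) l j) = ((1 - M) * M ^ k) i j := (Matrix.mul_apply).symm
      rw [this, sub_mul, one_mul, pow_succ']
      simp [Matrix.sub_apply]
    simp_rw [hsw]
    rw [Summable.tsum_sub (hsum i j) ((summable_nat_add_iff 1).mpr (hsum i j)), hShift]
    have hSij : (∑' k : ℕ, (M ^ k) i j) = S i j := rfl
    rw [hSij]; ring
  · ext i j
    rw [Matrix.mul_apply]
    have hstep : ∀ l, S i l * (1 - M) l j = ∑' k : ℕ, (M ^ k) i l * (1 - M) l j := by
      intro l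
      rw [hS]; simp only [Matrix.of_apply]
      exact (tsum_mul_right).symm
    simp_rw [hstep]
    rw [← Summable.tsum_finsetSum (fun l _ => (hsum i l).mul_right _)]
    have hsw : ∀ k : ℕ, (∑ l, (M ^ k) i l * (1 - M) l j) = (M ^ k) i j - (M ^ (k + 1)) i j := by
      intro k
      have h : (∑ l, (M ^ k) i l * (1 - M) l j) = (M ^ k * (1 - M)) i j := (Matrix.mul_apply).symm
      rw [h, mul_sub, mul_one, pow_succ]
      simp [Matrix.sub_apply]
    simp_rw [hsw]
    rw [Summable.tsum_sub (hsum i j) ((summable_nat_add_iff 1).mpr (hsum i j)), hShift]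
    have hSij : (∑' k : ℕ, (M ^ k) i j) = S i j := rfl
    rw [hSij]; ring

end Aux

theorem stmt_5 (n : ℕ) (A : Matrix (Fin n) (Fin n) ℝ) (hA : IsUnit A)
    (hρ : specRad (matAbs A⁻¹) < 1)
    (b xstar : Fin n → ℝ) (hsol : A.mulVec xstar - b = fun i => |xstar i|) :
    IsUnit (1 - matAbs A⁻¹) ∧
      (∀ i j, 0 ≤ (1 - matAbs A⁻¹)⁻¹ i j) ∧
      ∀ x : Fin n → ℝ, ∀ i,
        |x i - xstar i| ≤
          ((1 - matAbs A⁻¹)⁻¹ * matAbs A⁻¹).mulVec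
            (fun i => abs (A.mulVec x i - b i - |x i|)) i := by
  set M := matAbs A⁻¹ with hMdef
  have hM : ∀ i j, 0 ≤ M i j := fun i j => abs_nonneg _
  obtain ⟨S, h1, h2, hSpos⟩ := neumann n M hρ hM
  have hUnit : IsUnit (1 - M) := ⟨⟨1 - M, S, h1, h2⟩, rfl⟩
  have hinv : (1 - M)⁻¹ = S := Matrix.inv_eq_right_inv h1
  refine ⟨hUnit, ?_, ?_⟩
  · rw [hinv]; exact hSpos
  intro x i
  rw [hinv]
  set e : Fin n → ℝ := fun j => |x j - xstar j| with he
  set rr : Fin n → ℝ := fun j => abs (A.mulVec x j - b j - |x j|) with hrr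
  -- key inequality: e ≤ M.mulVec (rr + e)
  have hAinvA : A⁻¹ * A = 1 := Matrix.nonsing_inv_mul A (A.isUnit_iff_isUnit_det.mp hA)
  have hrec : ∀ j, x j - xstar j = A⁻¹.mulVec (A.mulVec (fun l => x l - xstar l)) j := by
    intro j
    rw [Matrix.mulVec_mulVec, hAinvA, Matrix.one_mulVec]
  have hures : ∀ j, |A.mulVec (fun l => x l - xstar l) j| ≤ rr j + e j := by
    intro j
    have hsub : A.mulVec (fun l => x l - xstar l) j = A.mulVec x j - A.mulVec xstar j := by
      have : (fun l => x l - xstar l) = x - xstar := rfl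
      rw [this, Matrix.mulVec_sub, Pi.sub_apply]
    have hstar : A.mulVec xstar j = b j + |xstar j| := by
      have := congrFun hsol j
      simp only [Pi.sub_apply] at this
      linarith
    rw [hsub, hstar]
    have : A.mulVec x j - (b j + |xstar j|) =
        (A.mulVec x j - b j - |x j|) + (|x j| - |xstar j|) := by ring
    rw [this]
    calc |(A.mulVec x j - b j - |x j|) + (|x j| - |xstar j|)|
        ≤ abs (A.mulVec x j - b j - |x j|) + abs (|x j| - |xstar j|) := abs_add_le _ _
      _ ≤ rr j + e j :=
          add_le_add (le_refl _) (abs_abs_sub_abs_le_abs_sub _ _)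
  have hkey : ∀ j, e j ≤ M.mulVec (fun l => rr l + e l) j := by
    intro j
    rw [he]
    simp only
    rw [hrec j]
    rw [Matrix.mulVec, dotProduct]
    calc |∑ l, A⁻¹ j l * A.mulVec (fun l => x l - xstar l) l|
        ≤ ∑ l, |A⁻¹ j l * A.mulVec (fun l => x l - xstar l) l| :=
          Finset.abs_sum_le_sum_abs _ _
      _ ≤ ∑ l, M j l * (rr l + e l) := by
          apply Finset.sum_le_sum
          intro l _
          rw [abs_mul]
          exact mul_le_mul_of_nonneg_left (hures l) (abs_nonneg _)
      _ = M.mulVec (fun l => rr l + e l) j := by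
          rw [Matrix.mulVec, dotProduct]
  -- (1-M).mulVec e ≤ M.mulVec rr entrywise
  have hstep : ∀ j, (1 - M).mulVec e j ≤ M.mulVec rr j := by
    intro j
    have hsplit : M.mulVec (fun l => rr l + e l) = M.mulVec rr + M.mulVec e := by
      have : (fun l => rr l + e l) = rr + e := rfl
      rw [this, Matrix.mulVec_add]
    have h := hkey j
    rw [hsplit] at h
    rw [Matrix.sub_mulVec, Matrix.one_mulVec, Pi.sub_apply]
    simp only [Pi.add_apply] at h
    linarith
  -- monotonicity of S.mulVec
  have hmono : ∀ (u v : Fin n → ℝ), (∀ j, u j ≤ v j) → ∀ j, S.mulVec u j ≤ S.mulVec v j := by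
    intro u v huv j
    rw [Matrix.mulVec, Matrix.mulVec, dotProduct, dotProduct]
    exact Finset.sum_le_sum fun l _ => mul_le_mul_of_nonneg_left (huv l) (hSpos j l)
  have heid : e = S.mulVec ((1 - M).mulVec e) := by
    rw [Matrix.mulVec_mulVec, h2, Matrix.one_mulVec]
  calc |x i - xstar i| = e i := rfl
    _ = S.mulVec ((1 - M).mulVec e) i := by rw [← heid]
    _ ≤ S.mulVec (M.mulVec rr) i := hmono _ _ hstep i
    _ = (S * M).mulVec rr i := by rw [Matrix.mulVec_mulVec]
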